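/- Let g be the 3-state cellular automaton on states Fin 3 defined by g(i,j,k) = 0 if j = 0 and i = k, and g(i,j,k) = max(i, max(j, k)) otherwise. For 0 ≤ j ≤ i ≤ n define w_{i,j} : Fin n → Fin 3 by w_{i,j}(d) = 0 if d < j, w_{i,j}(d) = 1 if j ≤ d < i, and w_{i,j}(d) = 2 if i ≤ d. Then for all 0 ≤ j ≤ i ≤ n and 0 ≤ j' ≤ i' ≤ n, g^n(w_{i,j}, 0, w_{i',j'}) = 0 if and only if (i,j) = (i',j'). Consequently the matrix M_0^n of g has at least (n+1)(n+2)/2 distinct rows, so the number of distinct rows grows quadratically in n. -/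

import Mathlib

/-- The `n`-th iterate of a one-dimensional CA local rule `f`, applied to an
assignment `x` of states to integer positions. It only depends on positions `-n,…,n`:
`caIter f 1 x = f (x (-1)) (x 0) (x 1)` and
`caIter f (n+1) x = f (caIter f n (x shifted left)) (caIter f n x) (caIter f n (x shifted right))`. -/
def caIter {Q : Type*} (f : Q → Q → Q → Q) : ℕ → (ℤ → Q) → Q
  | 0, x => x 0
  | n + 1, x =>
      f (caIter f n fun i => x (i - 1)) (caIter f n x) (caIter f n fun i => x (i + 1))

/-- The assignment of states to integer positions determined by left cells `u`
(`u i` at position `-(i+1)`), center `c` (position `0`) and right cells `v`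
(`v i` at position `i+1`); positions outside `-n,…,n` (irrelevant for `caIter f n`)
are padded with `c`. -/
def caEmbed {Q : Type*} (n : ℕ) (u : Fin n → Q) (c : Q) (v : Fin n → Q) : ℤ → Q :=
  fun i =>
    if h : 1 ≤ i ∧ i ≤ (n : ℤ) then v ⟨(i - 1).toNat, by omega⟩
    else if h' : 1 ≤ -i ∧ -i ≤ (n : ℤ) then u ⟨(-i - 1).toNat, by omega⟩
    else c

/-- `f^n(u, c, v)`. -/
def caApply {Q : Type*} (f : Q → Q → Q → Q) (n : ℕ) (u : Fin n → Q) (c : Q)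
    (v : Fin n → Q) : Q :=
  caIter f n (caEmbed n u c v)

/-- Number of distinct rows of the matrix `M_c^n`. -/
noncomputable def caRows {Q : Type*} (f : Q → Q → Q → Q) (n : ℕ) (c : Q) : ℕ :=
  Set.ncard {g : (Fin n → Q) → Q | ∃ u : Fin n → Q, g = fun v => caApply f n u c v}

/-- Number of distinct columns of the matrix `M_c^n`. -/
noncomputable def caCols {Q : Type*} (f : Q → Q → Q → Q) (n : ℕ) (c : Q) : ℕ :=
  Set.ncard {g : (Fin n → Q) → Q | ∃ v : Fin n → Q, g = fun u => caApply f n u c v}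

/-- `d_n(f)` for an ECA `f`. -/
noncomputable def dnECA (f : Bool → Bool → Bool → Bool) (n : ℕ) : ℕ :=
  max (max (caRows f n false) (caCols f n false)) (max (caRows f n true) (caCols f n true))

def caStep {Q : Type*} (f : Q → Q → Q → Q) (x : ℤ → Q) : ℤ → Q :=
  fun p => f (x (p - 1)) (x p) (x (p + 1))

lemma caIter_succ' {Q : Type*} (f : Q → Q → Q → Q) (n : ℕ) (x : ℤ → Q) :
    caIter f (n + 1) x = caIter f n (caStep f x) := by
  induction n generalizing x with
  | zero =>
      show f _ _ _ = caStep f x 0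
      simp [caStep, caIter]
  | succ n ih =>
      have hL : (fun i => caStep f x (i - 1)) = caStep f (fun i => x (i - 1)) := by
        funext p; simp only [caStep]
        rw [show p - 1 + 1 = p + 1 - 1 by ring]
      have hR : (fun i => caStep f x (i + 1)) = caStep f (fun i => x (i + 1)) := by
        funext p; simp only [caStep]
        rw [show p + 1 - 1 = p - 1 + 1 by ring]
      show f (caIter f (n+1) fun i => x (i - 1)) (caIter f (n+1) x) (caIter f (n+1) fun i => x (i + 1))
        = f (caIter f n fun i => caStep f x (i - 1)) (caIter f n (caStep f x)) (caIter f n fun i => caStep f x (i + 1))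
      rw [ih, ih, ih, hL, hR]

lemma caIter_eq_iterate {Q : Type*} (f : Q → Q → Q → Q) (n : ℕ) (x : ℤ → Q) :
    caIter f n x = (caStep f)^[n] x 0 := by
  induction n generalizing x with
  | zero => rfl
  | succ n ih => rw [caIter_succ', ih, Function.iterate_succ_apply]

lemma caIter_congr {Q : Type*} (f : Q → Q → Q → Q) (n : ℕ) (x y : ℤ → Q)
    (h : ∀ p : ℤ, -(n:ℤ) ≤ p → p ≤ n → x p = y p) : caIter f n x = caIter f n y := by
  induction n generalizing x y with
  | zero => exact h 0 (by norm_num) (by norm_num)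
  | succ n ih =>
      show f _ _ _ = f _ _ _
      rw [ih (fun i => x (i-1)) (fun i => y (i-1)) (fun p h1 h2 => h _ (by omega) (by omega)),
          ih x y (fun p h1 h2 => h _ (by omega) (by omega)),
          ih (fun i => x (i+1)) (fun i => y (i+1)) (fun p h1 h2 => h _ (by omega) (by omega))]

def Xc (i j i' j' : ℕ) : ℤ → Fin 3 := fun p =>
  if 0 ≤ p then (if p ≤ (j' : ℤ) then 0 else if p ≤ (i' : ℤ) then 1 else 2)
  else (if -p ≤ (j : ℤ) then 0 else if -p ≤ (i : ℤ) then 1 else 2)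

section Three
variable (g : Fin 3 → Fin 3 → Fin 3 → Fin 3)
  (hg : ∀ i j k : Fin 3, g i j k = if j = 0 ∧ i = k then 0 else max i (max j k))
include hg

set_option maxHeartbeats 2000000 in
lemma step_S1 {i j i' j' : ℕ} (h1 : 1 ≤ j) (h2 : j ≤ i) (h3 : 1 ≤ j') (h4 : j' ≤ i') :
    caStep g (Xc i j i' j') = Xc (i-1) (j-1) (i'-1) (j'-1) := by
  funext p
  simp only [caStep, Xc, hg]
  split_ifs <;> first | rfl | (exfalso; omega)

set_option maxHeartbeats 2000000 in
lemma step_S2 {i i' : ℕ} (h1 : 1 ≤ i) (h2 : 1 ≤ i') :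
    caStep g (Xc i 0 i' 0) = Xc (i-1) 0 (i'-1) 0 := by
  funext p
  simp only [caStep, Xc, hg]
  split_ifs <;> first | rfl | (exfalso; omega)

-- iterated phase 1
lemma iter_S1 {i j i' j' : ℕ} (h2 : j ≤ i) (h4 : j' ≤ i') (t : ℕ) (ht : t ≤ j) (ht' : t ≤ j') :
    (caStep g)^[t] (Xc i j i' j') = Xc (i-t) (j-t) (i'-t) (j'-t) := by
  induction t with
  | zero => simp
  | succ t ih =>
      rw [Function.iterate_succ_apply', ih (by omega) (by omega),
          step_S1 g hg (by omega) (by omega) (by omega) (by omega)]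
      simp only [Nat.sub_sub]

lemma iter_S2 {i i' : ℕ} (t : ℕ) (ht : t ≤ i) (ht' : t ≤ i') :
    (caStep g)^[t] (Xc i 0 i' 0) = Xc (i-t) 0 (i'-t) 0 := by
  induction t with
  | zero => simp
  | succ t ih =>
      rw [Function.iterate_succ_apply', ih (by omega) (by omega),
          step_S2 g hg (by omega) (by omega)]
      simp only [Nat.sub_sub]

-- monotone: nonzero center stays nonzero
lemma center_stays_ne (m : ℕ) (x : ℤ → Fin 3) (hx : x 0 ≠ 0) :
    (caStep g)^[m] x 0 ≠ 0 := by
  induction m generalizing x with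
  | zero => exact hx
  | succ m ih =>
      rw [Function.iterate_succ_apply]
      apply ih
      show g (x (0-1)) (x 0) (x (0+1)) ≠ 0
      rw [hg]
      have key : ∀ a b c : Fin 3, b ≠ 0 →
          (if b = 0 ∧ a = c then (0 : Fin 3) else max a (max b c)) ≠ 0 := by decide
      exact key _ _ _ hx

-- symmetric center stays zero
lemma center_stays_zero (m : ℕ) (x : ℤ → Fin 3) (hsym : ∀ p : ℤ, x (-p) = x p)
    (hx : x 0 = 0) : (caStep g)^[m] x 0 = 0 := by
  have gsym : ∀ a b c : Fin 3, g a b c = g c b a := by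
    intro a b c; rw [hg, hg]; revert a b c; decide
  induction m generalizing x with
  | zero => exact hx
  | succ m ih =>
      rw [Function.iterate_succ_apply]
      apply ih
      · intro p
        show g (x (-p-1)) (x (-p)) (x (-p+1)) = g (x (p-1)) (x p) (x (p+1))
        rw [show (-p-1 : ℤ) = -(p+1) by ring, show (-p+1 : ℤ) = -(p-1) by ring,
            hsym, hsym, hsym, gsym]
      · show g (x (0-1)) (x 0) (x (0+1)) = 0
        have : x (0-1 : ℤ) = x (0+1 : ℤ) := by
          rw [show (0-1 : ℤ) = -(0+1) by ring, hsym]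
        rw [this, hx, hg]
        simp

-- trigger lemmas
lemma trig_a {i i' j' : ℕ} (h3 : 1 ≤ j') (h4 : j' ≤ i') :
    caStep g (Xc i 0 i' j') 0 ≠ 0 := by
  simp only [caStep, Xc, hg]
  clear hg
  norm_num
  split_ifs <;> first | (exfalso; omega) | decide | (refine ⟨by omega, by decide, by decide⟩) | simp

lemma trig_b {i j i' : ℕ} (h3 : 1 ≤ j) (h4 : j ≤ i) :
    caStep g (Xc i j i' 0) 0 ≠ 0 := by
  simp only [caStep, Xc, hg]
  clear hg
  norm_num
  split_ifs <;> first | (exfalso; omega) | decide | (refine ⟨by omega, by decide, by decide⟩) | simp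

lemma trig_c {i' : ℕ} (h : 1 ≤ i') : caStep g (Xc 0 0 i' 0) 0 ≠ 0 := by
  simp only [caStep, Xc, hg]
  clear hg
  norm_num
  split_ifs <;> first | (exfalso; omega) | decide | (refine ⟨by omega, by decide, by decide⟩) | simp

lemma trig_d {i : ℕ} (h : 1 ≤ i) : caStep g (Xc i 0 0 0) 0 ≠ 0 := by
  simp only [caStep, Xc, hg]
  clear hg
  norm_num
  split_ifs <;> first | (exfalso; omega) | decide | (refine ⟨by omega, by decide, by decide⟩) | simp

-- symmetry of Xc i j i j
omit hg in
lemma Xc_symm (i j : ℕ) : ∀ p : ℤ, Xc i j i j (-p) = Xc i j i j p := by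
  intro p
  simp only [Xc]
  split_ifs <;> first | rfl | (exfalso; omega)

-- the main zero/nonzero dichotomy
lemma main_zero (n i j : ℕ) : (caStep g)^[n] (Xc i j i j) 0 = 0 :=
  center_stays_zero g hg n _ (Xc_symm i j) (by simp [Xc])

lemma main_ne {n i j i' j' : ℕ} (hji : j ≤ i) (hin : i ≤ n) (hji' : j' ≤ i') (hin' : i' ≤ n)
    (hne : ¬(i = i' ∧ j = j')) : (caStep g)^[n] (Xc i j i' j') 0 ≠ 0 := by
  rcases Nat.lt_trichotomy j j' with hj | hj | hj
  · have key : (caStep g)^[1 + j] (Xc i j i' j') 0 ≠ 0 := by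
      rw [Function.iterate_add_apply, iter_S1 g hg hji hji' j le_rfl (by omega),
          Nat.sub_self, Function.iterate_one]
      exact trig_a g hg (by omega) (by omega)
    rw [show n = (n - (1 + j)) + (1 + j) by omega, Function.iterate_add_apply]
    exact center_stays_ne g hg _ _ key
  · rcases Nat.lt_trichotomy i i' with hi | hi | hi
    · have e : (caStep g)^[(i - j) + j] (Xc i j i' j') = Xc 0 0 (i' - i) 0 := by
        rw [Function.iterate_add_apply, iter_S1 g hg hji hji' j le_rfl (by omega),
            Nat.sub_self, show j' - j = 0 by omega,
            iter_S2 g hg (i - j) le_rfl (by omega), Nat.sub_self,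
            show i' - j - (i - j) = i' - i by omega]
      have key : (caStep g)^[1 + ((i - j) + j)] (Xc i j i' j') 0 ≠ 0 := by
        rw [Function.iterate_add_apply, e, Function.iterate_one]
        exact trig_c g hg (by omega)
      rw [show n = (n - (1 + ((i - j) + j))) + (1 + ((i - j) + j)) by omega,
          Function.iterate_add_apply]
      exact center_stays_ne g hg _ _ key
    · exact absurd ⟨hi, hj⟩ hne
    · have e : (caStep g)^[(i' - j) + j] (Xc i j i' j') = Xc (i - i') 0 0 0 := by
        rw [Function.iterate_add_apply, iter_S1 g hg hji hji' j le_rfl (by omega),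
            Nat.sub_self, show j' - j = 0 by omega,
            iter_S2 g hg (i' - j) (by omega) le_rfl, Nat.sub_self,
            show i - j - (i' - j) = i - i' by omega]
      have key : (caStep g)^[1 + ((i' - j) + j)] (Xc i j i' j') 0 ≠ 0 := by
        rw [Function.iterate_add_apply, e, Function.iterate_one]
        exact trig_d g hg (by omega)
      rw [show n = (n - (1 + ((i' - j) + j))) + (1 + ((i' - j) + j)) by omega,
          Function.iterate_add_apply]
      exact center_stays_ne g hg _ _ key
  · have key : (caStep g)^[1 + j'] (Xc i j i' j') 0 ≠ 0 := by
      rw [Function.iterate_add_apply, iter_S1 g hg hji hji' j' (by omega) le_rfl,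
          Nat.sub_self, Function.iterate_one]
      exact trig_b g hg (by omega) (by omega)
    rw [show n = (n - (1 + j')) + (1 + j') by omega, Function.iterate_add_apply]
    exact center_stays_ne g hg _ _ key

end Three

lemma embed_eq {n i j i' j' : ℕ} (u v : Fin n → Fin 3)
    (hu : ∀ d : Fin n, u d = if (d : ℕ) < j then 0 else if (d : ℕ) < i then 1 else 2)
    (hv : ∀ d : Fin n, v d = if (d : ℕ) < j' then 0 else if (d : ℕ) < i' then 1 else 2) :
    ∀ p : ℤ, -(n:ℤ) ≤ p → p ≤ n → caEmbed n u 0 v p = Xc i j i' j' p := by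
  intro p hp1 hp2
  simp only [caEmbed, hu, hv, Xc]
  split_ifs <;> first | rfl | (exfalso; omega)



/-- For the 3-state CA `g(i,j,k) = 0` if `j = 0 ∧ i = k` and `max i (max j k)` otherwise:
with `w_{i,j}(d) = 0` for `d < j`, `1` for `j ≤ d < i` and `2` for `i ≤ d`, the entry
`g^n(w_{i,j}, 0, w_{i',j'})` is `0` iff `(i,j) = (i',j')`; consequently `M_0^n` has at
least `(n+1)(n+2)/2` distinct rows, i.e. quadratically many. -/
theorem threeState_quadratic (g : Fin 3 → Fin 3 → Fin 3 → Fin 3)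
    (hg : ∀ i j k : Fin 3, g i j k = if j = 0 ∧ i = k then 0 else max i (max j k))
    (w : ∀ n : ℕ, ℕ → ℕ → Fin n → Fin 3)
    (hw : ∀ (n i j : ℕ) (d : Fin n),
      w n i j d = if (d : ℕ) < j then 0 else if (d : ℕ) < i then 1 else 2) :
    ∀ n : ℕ, 1 ≤ n →
      (∀ i j i' j' : ℕ, j ≤ i → i ≤ n → j' ≤ i' → i' ≤ n →
        (caApply g n (w n i j) 0 (w n i' j') = 0 ↔ (i = i' ∧ j = j'))) ∧
      (n + 1) * (n + 2) / 2 ≤ caRows g n 0 := by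
  intro n hn
  have hXeq : ∀ i j i' j' : ℕ,
      caApply g n (w n i j) 0 (w n i' j') = (caStep g)^[n] (Xc i j i' j') 0 := by
    intro i j i' j'
    unfold caApply
    rw [caIter_congr g n _ (Xc i j i' j')
        (embed_eq (w n i j) (w n i' j') (fun d => hw n i j d) (fun d => hw n i' j' d)),
      caIter_eq_iterate]
  have part1 : ∀ i j i' j' : ℕ, j ≤ i → i ≤ n → j' ≤ i' → i' ≤ n →
      (caApply g n (w n i j) 0 (w n i' j') = 0 ↔ (i = i' ∧ j = j')) := by
    intro i j i' j' hji hin hji' hin'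
    rw [hXeq]
    constructor
    · intro h0
      by_contra hne
      exact main_ne g hg hji hin hji' hin' hne h0
    · rintro ⟨rfl, rfl⟩
      exact main_zero g hg n i j
  refine ⟨part1, ?_⟩
  classical
  set F : Set ((Fin n → Fin 3) → Fin 3) :=
    {h | ∃ u : Fin n → Fin 3, h = fun v => caApply g n u 0 v} with hF
  have hfin : F.Finite := Set.toFinite _
  set T : Finset ((_ : ℕ) × ℕ) := (Finset.range (n+1)).sigma fun i => Finset.range (i+1)
    with hT
  have hcard : T.card ≤ hfin.toFinset.card := by
    apply Finset.card_le_card_of_injOn (fun p => fun v => caApply g n (w n p.1 p.2) 0 v)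
    · intro a _
      simp only [Set.Finite.mem_toFinset]
      exact (Set.Finite.mem_toFinset hfin).mpr ⟨w n a.1 a.2, rfl⟩
    · rintro ⟨x, y⟩ ha ⟨x', y'⟩ hb hab
      simp only [hT, Finset.mem_coe, Finset.mem_sigma, Finset.mem_range] at ha hb
      obtain ⟨ha1, ha2⟩ := ha
      obtain ⟨hb1, hb2⟩ := hb
      have h1 := congrFun hab (w n x y)
      dsimp only at h1
      have h2 : caApply g n (w n x y) 0 (w n x y) = 0 :=
        (part1 x y x y (by omega) (by omega) (by omega) (by omega)).mpr ⟨rfl, rfl⟩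
      have h3 : caApply g n (w n x' y') 0 (w n x y) = 0 := by
        rw [← h1]; exact h2
      have h4 := (part1 x' y' x y (by omega) (by omega) (by omega) (by omega)).mp h3
      obtain ⟨h5, h6⟩ := h4
      subst h5; subst h6; rfl
  have hTcard : T.card = ∑ i ∈ Finset.range (n+1), (i+1) := by
    simp [hT, Finset.card_sigma]
  have hsum : (∑ i ∈ Finset.range (n+1), (i+1))
      = (∑ i ∈ Finset.range (n+1), i) + (n+1) := by
    rw [Finset.sum_add_distrib, Finset.sum_const, Finset.card_range, smul_eq_mul, mul_one]
  have hG := Finset.sum_range_id_mul_two (n+1)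
  rw [Nat.add_sub_cancel] at hG
  have h2 : (n+1)*(n+2) = ((∑ i ∈ Finset.range (n+1), i) + (n+1)) * 2 := by
    conv_rhs => rw [add_mul]
    rw [hG]; ring
  have key : (n+1)*(n+2)/2 ≤ T.card := by
    rw [hTcard, hsum, h2]
    omega
  have hrows : caRows g n 0 = hfin.toFinset.card := Set.ncard_eq_toFinset_card _ hfin
  rw [hrows]
  exact le_trans key hcard
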